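/- arXiv:0806.1148 — 3 statements merged into one kernel-verified Lean document; each statement's English description precedes it below -/
import Mathlib

section
/- There exists a constant C such that for all sufficiently large k there is an unsatisfiable k-CNF formula F with occ_F(x)·occ_F(x̄) ≤ C·3.01^k for every variable x. -/
open scoped Classical

abbrev Var := ℕ
abbrev Lit := Var × Bool
abbrev Clause := Finset Lit
abbrev CNF := Finset Clause

/-- A clause is valid if no variable occurs both positively and negatively. -/
def ClauseValid (C : Clause) : Prop :=
  ∀ x : Var, ¬(((x, true) ∈ C) ∧ ((x, false) ∈ C))

/-- Assignment `α` satisfies clause `C`. -/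
def SatC (α : Var → Bool) (C : Clause) : Prop := ∃ l ∈ C, α l.1 = l.2

/-- A CNF formula is satisfiable. -/
def Satisfiable (F : CNF) : Prop := ∃ α : Var → Bool, ∀ C ∈ F, SatC α C

/-- Two clauses conflict: some variable positive in one, negative in the other. -/
def Conflict (C D : Clause) : Prop :=
  ∃ x : Var, (((x, true) ∈ C) ∧ ((x, false) ∈ D)) ∨ (((x, false) ∈ C) ∧ ((x, true) ∈ D))

/-- Number of clauses of `F` containing the literal `u`. -/
noncomputable def occ (F : CNF) (u : Lit) : ℕ := (F.filter (fun C => u ∈ C)).card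

/-- Number of unordered conflicting pairs of distinct clauses. -/
noncomputable def numConflicts (F : CNF) : ℕ :=
  ((F ×ˢ F).filter (fun p => p.1 ≠ p.2 ∧ Conflict p.1 p.2)).card / 2

/-- `F` is a `k`-CNF formula. -/
def IsKCNF (k : ℕ) (F : CNF) : Prop := ∀ C ∈ F, C.card = k ∧ ClauseValid C

/-- All clauses of `Fp` have exactly `l` literals, all positive. -/
def PosClauses (l : ℕ) (Fp : CNF) : Prop :=
  ∀ C ∈ Fp, C.card = l ∧ ∀ u ∈ C, u.2 = true

/-- All clauses of `Fn` have exactly `k` literals, all negative. -/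
def NegClauses (k : ℕ) (Fn : CNF) : Prop :=
  ∀ C ∈ Fn, C.card = k ∧ ∀ u ∈ C, u.2 = false

/-- The variables occurring in `F`. -/
noncomputable def varsOf (F : CNF) : Finset Var := F.biUnion (fun C => C.image Prod.fst)

/-- All `2^|V|` clauses obtained by disjoining `C` with a full sign pattern on `V`. -/
noncomputable def expansions (C : Clause) (V : Finset Var) : Finset Clause :=
  (Finset.univ : Finset ({x // x ∈ V} → Bool)).image
    (fun s => C ∪ V.attach.image (fun x => (x.1, s x)))

/-- The complete `k`-CNF formula over the variables `0, …, k-1`. -/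
noncomputable def completeCNF (k : ℕ) : CNF := expansions ∅ (Finset.range k)

/-- `G` is a `k`-CNFification of `F`: each clause `C` of `F` is replaced by the
`2^(k - |C|)` expansions of `C` over `k - |C|` fresh variables, fresh per clause. -/
noncomputable def IsKCNFification (k : ℕ) (F G : CNF) : Prop :=
  ∃ Y : Clause → Finset Var,
    (∀ C ∈ F, Disjoint (Y C) (varsOf F)) ∧
    (∀ C ∈ F, ∀ D ∈ F, C ≠ D → Disjoint (Y C) (Y D)) ∧
    (∀ C ∈ F, (Y C).card = k - C.card) ∧
    G = F.biUnion (fun C => expansions C (Y C))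

section AuxSZ
open Finset

/-- helper: division bound -/
lemma div_le_of_le_mul' {a b c : ℕ} (hc : 0 < c) (h : a ≤ c * b) : a / c ≤ b := by
  have h2 := Nat.div_le_div_right (c := c) h
  rwa [Nat.mul_div_cancel_left _ hc] at h2

lemma mul_div_succ_ge (M c : ℕ) (hc : 0 < c) : M ≤ c * (M / c + 1) := by
  have h1 := Nat.div_add_mod M c
  have h2 := Nat.mod_lt M hc
  rw [Nat.mul_add, Nat.mul_one]
  omega

/-- Core counting bound. -/
lemma count_lt {M c K n : ℕ} (h1 : 1 ≤ c) (h2 : c ≤ M) (h3 : (n+2)*M ≤ c*K) :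
    2^n * (M - c)^K < M^K := by
  have hMpos : 0 < M := le_trans h1 h2
  have hcast : ((2:ℝ)^n * ((M - c : ℕ) : ℝ)^K < ((M:ℝ))^K) → 2^n * (M - c)^K < M^K := by
    intro h
    have := h
    push_cast at this ⊢
    exact_mod_cast this
  apply hcast
  have hMR : (0:ℝ) < M := by exact_mod_cast hMpos
  have hcR : (0:ℝ) < c := by exact_mod_cast h1
  have hsub : ((M - c : ℕ) : ℝ) = (M:ℝ) - c := by
    rw [Nat.cast_sub h2]
  have hfrac : (c:ℝ)/M ≤ 1 := by
    rw [div_le_one hMR]; exact_mod_cast h2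
  have step1 : (M:ℝ) - c ≤ M * Real.exp (-(c/M)) := by
    have h' : 1 - (c:ℝ)/M ≤ Real.exp (-(c/M)) := by
      have := Real.add_one_le_exp (-(c/M : ℝ))
      linarith
    have : (M:ℝ) * (1 - c/M) ≤ M * Real.exp (-(c/M)) := by
      exact mul_le_mul_of_nonneg_left h' (le_of_lt hMR)
    calc (M:ℝ) - c = M * (1 - c/M) := by field_simp
    _ ≤ _ := this
  have hnn : (0:ℝ) ≤ (M:ℝ) - c := by
    have : (c:ℝ) ≤ M := by exact_mod_cast h2
    linarith
  have step2 : ((M:ℝ) - c)^K ≤ (M * Real.exp (-(c/M)))^K :=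
    pow_le_pow_left₀ hnn step1 K
  have step3 : (M * Real.exp (-(c/M)) : ℝ)^K = M^K * Real.exp (K * (-(c/M))) := by
    rw [mul_pow, ← Real.exp_nat_mul]
  have step4 : Real.exp ((K:ℝ) * (-(c/M))) ≤ Real.exp (-((n:ℝ)+2)) := by
    apply Real.exp_le_exp.2
    rw [mul_neg, neg_le_neg_iff]
    rw [← mul_div_assoc, le_div_iff₀ hMR]
    have : ((n:ℝ)+2) * M ≤ c * K := by exact_mod_cast h3
    nlinarith
  have step6 : (2:ℝ)^n * Real.exp (-((n:ℝ)+2)) < 1 := by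
    have he1 : (2:ℝ) < Real.exp 1 := by
      have := Real.exp_one_gt_d9
      linarith
    have hh : (2:ℝ)^n < Real.exp ((n:ℝ)+2) := by
      have h2n : (2:ℝ)^n ≤ (Real.exp 1)^n := by
        apply pow_le_pow_left₀ (by norm_num) (le_of_lt he1)
      have : (Real.exp 1)^n = Real.exp (n:ℝ) := by
        rw [← Real.exp_nat_mul, mul_one]
      rw [this] at h2n
      have : Real.exp (n:ℝ) < Real.exp ((n:ℝ)+2) := by
        apply Real.exp_lt_exp.2; linarith
      linarith
    have hepos := Real.exp_pos ((n:ℝ)+2)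
    rw [Real.exp_neg]
    have : (2:ℝ)^n * (Real.exp ((n:ℝ)+2))⁻¹ < Real.exp ((n:ℝ)+2) * (Real.exp ((n:ℝ)+2))⁻¹ := by
      apply mul_lt_mul_of_pos_right hh (by positivity)
    rwa [mul_inv_cancel₀ (ne_of_gt hepos)] at this
  have hfin : (2:ℝ)^n * ((M - c:ℕ):ℝ)^K ≤ (M:ℝ)^K * ((2:ℝ)^n * Real.exp (-((n:ℝ)+2))) := by
    rw [hsub]
    calc (2:ℝ)^n * ((M:ℝ)-c)^K ≤ (2:ℝ)^n * ((M:ℝ)^K * Real.exp ((K:ℝ) * (-(c/M)))) := by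
          apply mul_le_mul_of_nonneg_left _ (by positivity)
          rw [← step3]; exact step2
    _ ≤ (2:ℝ)^n * ((M:ℝ)^K * Real.exp (-((n:ℝ)+2))) := by
          apply mul_le_mul_of_nonneg_left _ (by positivity)
          apply mul_le_mul_of_nonneg_left step4 (by positivity)
    _ = (M:ℝ)^K * ((2:ℝ)^n * Real.exp (-((n:ℝ)+2))) := by ring
  have : (M:ℝ)^K * ((2:ℝ)^n * Real.exp (-((n:ℝ)+2))) < (M:ℝ)^K * 1 := by
    apply mul_lt_mul_of_pos_left step6 (by positivity)
  rw [mul_one] at this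
  linarith

/-- Generic union-bound existence of a good family. -/
lemma exists_good_family {α β : Type} (T : Finset α) (B : Finset β)
    (good : β → α → Prop) [∀ b a, Decidable (good b a)] (c K : ℕ)
    (hc : ∀ b ∈ B, c ≤ (T.filter (fun a => good b a)).card)
    (hK : B.card * (T.card - c) ^ K < T.card ^ K) :
    ∃ f : Fin K → α, (∀ i, f i ∈ T) ∧ ∀ b ∈ B, ∃ i, good b (f i) := by
  classical
  set Ω := Fintype.piFinset (fun _ : Fin K => T) with hΩ
  have hΩcard : Ω.card = T.card ^ K := by
    rw [hΩ, Fintype.card_piFinset_const]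
  set Bad := Ω.filter (fun f => ∃ b ∈ B, ∀ i, ¬ good b (f i)) with hBadDef
  have hsub : Bad ⊆ B.biUnion
      (fun b => Fintype.piFinset (fun _ : Fin K => T.filter (fun a => ¬ good b a))) := by
    intro f hf
    rw [hBadDef, mem_filter] at hf
    obtain ⟨hfΩ, b, hb, hgood⟩ := hf
    exact mem_biUnion.2 ⟨b, hb, Fintype.mem_piFinset.2
      (fun i => mem_filter.2 ⟨Fintype.mem_piFinset.1 hfΩ i, hgood i⟩)⟩
  have hBadcard : Bad.card < Ω.card := by
    have c1 : Bad.card ≤ ∑ b ∈ B,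
        (Fintype.piFinset (fun _ : Fin K => T.filter (fun a => ¬ good b a))).card :=
      le_trans (card_le_card hsub) (card_biUnion_le)
    have c2 : ∀ b ∈ B,
        (Fintype.piFinset (fun _ : Fin K => T.filter (fun a => ¬ good b a))).card
          ≤ (T.card - c)^K := by
      intro b hb
      rw [Fintype.card_piFinset_const]
      apply Nat.pow_le_pow_left
      have hsplit := card_filter_add_card_filter_not (s := T) (p := fun a => good b a)
      have := hc b hb
      omega
    have c3 : Bad.card ≤ B.card * (T.card - c)^K := by
      calc Bad.card ≤ ∑ b ∈ B, (T.card - c)^K := le_trans c1 (Finset.sum_le_sum c2)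
      _ = B.card * (T.card - c)^K := by rw [Finset.sum_const, smul_eq_mul]
    rw [hΩcard]
    exact lt_of_le_of_lt c3 hK
  have hne : (Ω \ Bad).Nonempty := by
    apply card_pos.1
    have hBsub : Bad ⊆ Ω := by rw [hBadDef]; exact filter_subset _ _
    rw [card_sdiff_of_subset hBsub]
    omega
  obtain ⟨f, hf⟩ := hne
  rw [mem_sdiff] at hf
  refine ⟨f, fun i => Fintype.mem_piFinset.1 hf.1 i, ?_⟩
  intro b hb
  by_contra hcon
  push_neg at hcon
  exact hf.2 (mem_filter.2 ⟨hf.1, b, hb, hcon⟩)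

noncomputable section Params

def nn1 (k : ℕ) : ℕ := k^2
def ll1 (k : ℕ) : ℕ := (7*k+33)/34
def ss1 (k : ℕ) : ℕ := 7*(nn1 k)/41 + 1
def cp1 (k : ℕ) : ℕ := (ss1 k).choose (ll1 k)
def cn1 (k : ℕ) : ℕ := (nn1 k - ss1 k + 1).choose k
def KP1 (k : ℕ) : ℕ := (nn1 k + 2) * ((nn1 k).choose (ll1 k) / cp1 k + 1)
def KN1 (k : ℕ) : ℕ := (nn1 k + 2) * ((nn1 k).choose k / cn1 k + 1)

lemma facts1 (k : ℕ) (hk : 100 ≤ k) :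
    ll1 k ≤ k ∧ k ≤ ss1 k ∧ ss1 k ≤ nn1 k ∧ k ≤ nn1 k - ss1 k + 1 ∧
    7*(nn1 k) + 1 ≤ 41 * ss1 k ∧ 41 * ss1 k ≤ 7 * nn1 k + 41 ∧
    7*k ≤ 34 * ll1 k ∧ 34 * ll1 k ≤ 7*k + 33 ∧ 1 ≤ ll1 k := by
  have hd1 := Nat.div_add_mod (7*k+33) 34
  have hm1 : (7*k+33) % 34 < 34 := Nat.mod_lt _ (by norm_num)
  have hd2 := Nat.div_add_mod (7*(nn1 k)) 41
  have hm2 : (7*(nn1 k)) % 41 < 41 := Nat.mod_lt _ (by norm_num)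
  have hll : 34 * ll1 k ≤ 7*k+33 ∧ 7*k ≤ 34 * ll1 k := by unfold ll1; omega
  have hssb : 7*(nn1 k) + 1 ≤ 41 * ss1 k ∧ 41 * ss1 k ≤ 7 * nn1 k + 41 := by
    unfold ss1; omega
  have hkx : 100*k ≤ k*k := Nat.mul_le_mul_right k hk
  have hn : nn1 k = k*k := sq k
  refine ⟨by omega, by omega, by omega, by omega, hssb.1, hssb.2, hll.2, hll.1, by omega⟩
lemma claimP (k : ℕ) (hk : 100 ≤ k) :
    ∃ f : Fin (KP1 k) → Finset ℕ,
      (∀ i, f i ∈ powersetCard (ll1 k) (range (nn1 k))) ∧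
      ∀ S ⊆ range (nn1 k), ss1 k ≤ S.card → ∃ i, f i ⊆ S := by
  obtain ⟨h1, h2, h3, h4, h5, h6, h7, h8, h9⟩ := facts1 k hk
  set n := nn1 k
  set l := ll1 k
  set T : Finset (Finset ℕ) := powersetCard l (range n) with hT
  set B : Finset (Finset ℕ) := ((range n).powerset).filter (fun S => ss1 k ≤ S.card) with hB
  have hTcard : T.card = n.choose l := by
    rw [hT, card_powersetCard, card_range]
  have hcp_pos : 1 ≤ cp1 k := Nat.choose_pos (le_trans h1 h2)
  have hcp_le : cp1 k ≤ T.card := by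
    rw [hTcard]; exact Nat.choose_le_choose l h3
  have hgood : ∀ b ∈ B, cp1 k ≤ (T.filter (fun a => a ⊆ b)).card := by
    intro b hb
    rw [hB, mem_filter, mem_powerset] at hb
    have hfil : T.filter (fun a => a ⊆ b) = powersetCard l b := by
      ext a
      simp only [hT, mem_filter, mem_powersetCard]
      constructor
      · rintro ⟨⟨_, hcard⟩, hsub⟩; exact ⟨hsub, hcard⟩
      · rintro ⟨hsub, hcard⟩; exact ⟨⟨hsub.trans hb.1, hcard⟩, hsub⟩
    rw [hfil, card_powersetCard]
    exact Nat.choose_le_choose l hb.2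
  have hcount : B.card * (T.card - cp1 k) ^ (KP1 k) < T.card ^ (KP1 k) := by
    have hBle : B.card ≤ 2^n := by
      calc B.card ≤ ((range n).powerset).card := card_filter_le _ _
      _ = 2^n := by rw [card_powerset, card_range]
    have hKmul : (n+2) * T.card ≤ cp1 k * KP1 k := by
      have := mul_div_succ_ge (T.card) (cp1 k) hcp_pos
      calc (n+2) * T.card ≤ (n+2) * (cp1 k * (T.card / cp1 k + 1)) :=
            Nat.mul_le_mul_left _ (by rw [hTcard] at this ⊢; exact this)
      _ = cp1 k * KP1 k := by rw [hTcard]; unfold KP1; ring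
    have := count_lt hcp_pos hcp_le hKmul
    calc B.card * (T.card - cp1 k) ^ (KP1 k) ≤ 2^n * (T.card - cp1 k) ^ (KP1 k) :=
          Nat.mul_le_mul_right _ hBle
    _ < T.card ^ (KP1 k) := this
  obtain ⟨f, hf1, hf2⟩ := exists_good_family T B (fun b a => a ⊆ b) (cp1 k) (KP1 k) hgood hcount
  refine ⟨f, hf1, fun S hS hScard => hf2 S ?_⟩
  rw [hB, mem_filter, mem_powerset]
  exact ⟨hS, hScard⟩

lemma claimN (k : ℕ) (hk : 100 ≤ k) :
    ∃ g : Fin (KN1 k) → Finset ℕ,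
      (∀ j, g j ∈ powersetCard k (range (nn1 k))) ∧
      ∀ S ⊆ range (nn1 k), S.card < ss1 k → ∃ j, Disjoint (g j) S := by
  obtain ⟨h1, h2, h3, h4, h5, h6, h7, h8, h9⟩ := facts1 k hk
  set n := nn1 k
  set T : Finset (Finset ℕ) := powersetCard k (range n) with hT
  set B : Finset (Finset ℕ) := ((range n).powerset).filter (fun S => S.card < ss1 k) with hB
  have hTcard : T.card = n.choose k := by
    rw [hT, card_powersetCard, card_range]
  have hcn_pos : 1 ≤ cn1 k := Nat.choose_pos h4
  have hcn_le : cn1 k ≤ T.card := by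
    rw [hTcard]; exact Nat.choose_le_choose k (by omega)
  have hgood : ∀ b ∈ B, cn1 k ≤ (T.filter (fun a => Disjoint a b)).card := by
    intro b hb
    rw [hB, mem_filter, mem_powerset] at hb
    have hfil : T.filter (fun a => Disjoint a b) = powersetCard k (range n \ b) := by
      ext a
      simp only [hT, mem_filter, mem_powersetCard, subset_sdiff]
      tauto
    rw [hfil, card_powersetCard, card_sdiff_of_subset hb.1, card_range]
    apply Nat.choose_le_choose
    have := card_le_card hb.1
    rw [card_range] at this
    omega
  have hcount : B.card * (T.card - cn1 k) ^ (KN1 k) < T.card ^ (KN1 k) := by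
    have hBle : B.card ≤ 2^n := by
      calc B.card ≤ ((range n).powerset).card := card_filter_le _ _
      _ = 2^n := by rw [card_powerset, card_range]
    have hKmul : (n+2) * T.card ≤ cn1 k * KN1 k := by
      have := mul_div_succ_ge (T.card) (cn1 k) hcn_pos
      calc (n+2) * T.card ≤ (n+2) * (cn1 k * (T.card / cn1 k + 1)) :=
            Nat.mul_le_mul_left _ (by rw [hTcard] at this ⊢; exact this)
      _ = cn1 k * KN1 k := by rw [hTcard]; unfold KN1; ring
    have := count_lt hcn_pos hcn_le hKmul
    calc B.card * (T.card - cn1 k) ^ (KN1 k) ≤ 2^n * (T.card - cn1 k) ^ (KN1 k) :=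
          Nat.mul_le_mul_right _ hBle
    _ < T.card ^ (KN1 k) := this
  obtain ⟨g, hg1, hg2⟩ := exists_good_family T B (fun b a => Disjoint a b) (cn1 k) (KN1 k) hgood hcount
  refine ⟨g, hg1, fun S hS hScard => hg2 S ?_⟩
  rw [hB, mem_filter, mem_powerset]
  exact ⟨hS, hScard⟩

end Params


section Build
open Finset

lemma buildF (k n s Kp Kn : ℕ) (l : ℕ) (hk : 0 < k) (hl : l ≤ k)
    (f : Fin Kp → Finset ℕ) (g : Fin Kn → Finset ℕ)
    (hf : ∀ i, f i ∈ powersetCard l (range n))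
    (hg : ∀ j, g j ∈ powersetCard k (range n))
    (hcov1 : ∀ S ⊆ range n, s ≤ S.card → ∃ i, f i ⊆ S)
    (hcov2 : ∀ S ⊆ range n, S.card < s → ∃ j, Disjoint (g j) S) :
    ∃ F : CNF, IsKCNF k F ∧ ¬ Satisfiable F ∧
      ∀ x : Var, occ F (x,true) * occ F (x,false) ≤ Kp * Kn * 2^(k-l) + 2^(k-l) * 2^(k-l) := by
  have hfsub : ∀ i, f i ⊆ range n ∧ (f i).card = l := fun i => mem_powersetCard.1 (hf i)
  have hgsub : ∀ j, g j ⊆ range n ∧ (g j).card = k := fun j => mem_powersetCard.1 (hg j)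
  set pads : Fin Kp → Finset ℕ := fun i => (range (k-l)).image (fun t => n + i.1*k + t) with hpads
  set posC : Fin Kp → Finset ℕ → Clause :=
    fun i T => (f i).image (fun x => (x,true)) ∪ (pads i).image (fun y => (y, decide (y ∈ T)))
    with hposC
  set negC : Fin Kn → Clause := fun j => (g j).image (fun x => (x,false)) with hnegC
  set NegP : CNF := (Finset.univ).image negC with hNegP
  set PosP : CNF := (Finset.univ).biUnion (fun i => ((pads i).powerset).image (posC i)) with hPosP
  have hpadmem : ∀ (i : Fin Kp) y, y ∈ pads i ↔ ∃ t, t < k - l ∧ n + i.1*k + t = y := by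
    intro i y
    simp [hpads, mem_image, mem_range]
  have hpad_ge : ∀ (i : Fin Kp) y, y ∈ pads i → n ≤ y := by
    intro i y hy
    obtain ⟨t, _, ht⟩ := (hpadmem i y).1 hy
    omega
  have hfx_lt : ∀ (i : Fin Kp) x, x ∈ f i → x < n := by
    intro i x hx
    have := (hfsub i).1 hx
    simpa [mem_range] using this
  have hgx_lt : ∀ (j : Fin Kn) x, x ∈ g j → x < n := by
    intro j x hx
    have := (hgsub j).1 hx
    simpa [mem_range] using this
  have hpad_card : ∀ i, (pads i).card = k - l := by
    intro i
    rw [hpads]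
    rw [card_image_of_injective _ (fun a b hab => by omega), card_range]
  have hpad_eq : ∀ (i i' : Fin Kp) y, y ∈ pads i → y ∈ pads i' → i = i' := by
    intro i i' y hy hy'
    obtain ⟨t, ht, hteq⟩ := (hpadmem i y).1 hy
    obtain ⟨t', ht', hteq'⟩ := (hpadmem i' y).1 hy'
    have h1 : i.1 * k + t = i'.1 * k + t' := by omega
    have htk : t < k := by omega
    have htk' : t' < k := by omega
    have e1 : (i.1 * k + t)/k = i.1 := by
      rw [mul_comm, Nat.mul_add_div hk, Nat.div_eq_of_lt htk, Nat.add_zero]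
    have e2 : (i'.1 * k + t')/k = i'.1 := by
      rw [mul_comm, Nat.mul_add_div hk, Nat.div_eq_of_lt htk', Nat.add_zero]
    apply Fin.ext
    rw [← e1, ← e2, h1]
  have hposmem : ∀ (i : Fin Kp) T u, u ∈ posC i T ↔
      ((∃ x ∈ f i, (x,true) = u) ∨ (∃ y ∈ pads i, (y, decide (y ∈ T)) = u)) := by
    intro i T u
    simp [hposC, mem_union, mem_image]
  have hnegmem : ∀ (j : Fin Kn) u, u ∈ negC j ↔ ∃ x ∈ g j, (x,false) = u := by
    intro j u
    simp [hnegC, mem_image]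
  have hposcard : ∀ (i : Fin Kp) T, (posC i T).card = k := by
    intro i T
    rw [hposC]
    have hdisj : Disjoint ((f i).image (fun x => (x,true)))
        ((pads i).image (fun y => (y, decide (y ∈ T)))) := by
      rw [disjoint_left]
      rintro u hu1 hu2
      rw [mem_image] at hu1 hu2
      obtain ⟨x, hx, rfl⟩ := hu1
      obtain ⟨y, hy, heq⟩ := hu2
      have : y = x := congrArg Prod.fst heq
      have := hpad_ge i y hy
      have := hfx_lt i x hx
      omega
    rw [card_union_of_disjoint hdisj]
    rw [card_image_of_injective _ (fun a b hab => congrArg Prod.fst hab),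
        card_image_of_injective _ (fun a b hab => congrArg Prod.fst hab),
        (hfsub i).2, hpad_card]
    omega
  refine ⟨NegP ∪ PosP, ?_, ?_, ?_⟩
  · -- IsKCNF
    intro C hC
    rcases mem_union.1 hC with hC | hC
    · rw [hNegP, mem_image] at hC
      obtain ⟨j, _, rfl⟩ := hC
      constructor
      · rw [hnegC, card_image_of_injective _ (fun a b hab => congrArg Prod.fst hab)]
        exact (hgsub j).2
      · intro x hx
        obtain ⟨z, _, hz⟩ := (hnegmem j (x, true)).1 hx.1
        exact Bool.noConfusion (congrArg Prod.snd hz)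
    · rw [hPosP, mem_biUnion] at hC
      obtain ⟨i, _, hC⟩ := hC
      rw [mem_image] at hC
      obtain ⟨T, _, rfl⟩ := hC
      refine ⟨hposcard i T, ?_⟩
      intro x hx
      obtain ⟨hxt, hxf⟩ := hx
      rcases (hposmem i T _).1 hxf with ⟨z, hz, hzz⟩ | ⟨y, hy, hyy⟩
      · exact Bool.noConfusion (congrArg Prod.snd hzz)
      · have hxy : y = x := congrArg Prod.fst hyy
        subst hxy
        rcases (hposmem i T _).1 hxt with ⟨z, hz, hzz⟩ | ⟨y', hy', hyy'⟩
        · have : z = y := congrArg Prod.fst hzz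
          subst this
          have := hpad_ge i z hy
          have := hfx_lt i z hz
          omega
        · have : y' = y := congrArg Prod.fst hyy'
          subst this
          have h1 := congrArg Prod.snd hyy
          have h2 := congrArg Prod.snd hyy'
          simp only at h1 h2
          rw [h1] at h2
          exact Bool.noConfusion h2
  · -- unsat
    rintro ⟨α, hα⟩
    set S : Finset ℕ := (range n).filter (fun x => α x = false) with hS
    have hSsub : S ⊆ range n := filter_subset _ _
    by_cases hcase : s ≤ S.card
    · obtain ⟨i, hi⟩ := hcov1 S hSsub hcase
      set T : Finset ℕ := (pads i).filter (fun y => α y = false) with hT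
      have hC : posC i T ∈ NegP ∪ PosP := by
        refine mem_union_right _ ?_
        rw [hPosP, mem_biUnion]
        exact ⟨i, mem_univ _, mem_image_of_mem _ (mem_powerset.2 (filter_subset _ _))⟩
      obtain ⟨u, hu, hsat⟩ := hα _ hC
      rcases (hposmem i T u).1 hu with ⟨x, hx, hxu⟩ | ⟨y, hy, hyu⟩
      · rw [← hxu] at hsat
        have hxS : x ∈ S := hi hx
        rw [hS, mem_filter] at hxS
        rw [hxS.2] at hsat
        exact Bool.noConfusion hsat
      · rw [← hyu] at hsat
        by_cases hay : α y = false
        · have hyT : y ∈ T := by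
            rw [hT, mem_filter]; exact ⟨hy, hay⟩
          simp only [hyT, decide_eq_true_eq, decide_true] at hsat
          rw [hay] at hsat
          exact Bool.noConfusion hsat
        · have hyT : y ∉ T := by
            rw [hT, mem_filter]
            intro hcon
            exact hay hcon.2
          simp only [hyT, decide_false] at hsat
          exact hay hsat
    · obtain ⟨j, hj⟩ := hcov2 S hSsub (lt_of_not_ge hcase)
      have hC : negC j ∈ NegP ∪ PosP := by
        refine mem_union_left _ ?_
        rw [hNegP]
        exact mem_image_of_mem _ (mem_univ _)
      obtain ⟨u, hu, hsat⟩ := hα _ hC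
      obtain ⟨x, hx, hxu⟩ := (hnegmem j u).1 hu
      rw [← hxu] at hsat
      have hxS : x ∈ S := by
        rw [hS, mem_filter, mem_range]
        exact ⟨hgx_lt j x hx, hsat⟩
      exact (disjoint_left.1 hj hx) hxS
  · -- occ bounds
    intro x
    have hocc_split : ∀ u : Lit, occ (NegP ∪ PosP) u ≤
        (NegP.filter (fun C => u ∈ C)).card + (PosP.filter (fun C => u ∈ C)).card := by
      intro u
      unfold occ
      rw [filter_union]
      exact card_union_le _ _
    have hNegP_card : NegP.card ≤ Kn := by
      rw [hNegP]
      exact le_trans card_image_le (by simp)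
    have hPosP_card : PosP.card ≤ Kp * 2^(k-l) := by
      rw [hPosP]
      calc ((Finset.univ).biUnion (fun i => ((pads i).powerset).image (posC i))).card
          ≤ ∑ i : Fin Kp, (((pads i).powerset).image (posC i)).card := card_biUnion_le
      _ ≤ ∑ _i : Fin Kp, 2^(k-l) := by
          refine Finset.sum_le_sum fun i _ => ?_
          exact le_trans card_image_le (by rw [card_powerset, hpad_card])
      _ = Kp * 2^(k-l) := by
          rw [Finset.sum_const, card_univ, Fintype.card_fin, smul_eq_mul]
    by_cases hx : x < n
    · have e1 : NegP.filter (fun C => ((x:Var),true) ∈ C) = ∅ := by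
        rw [filter_eq_empty_iff]
        intro C hC
        rw [hNegP, mem_image] at hC
        obtain ⟨j, _, rfl⟩ := hC
        intro hmem
        obtain ⟨z, _, hz⟩ := (hnegmem j _).1 hmem
        exact Bool.noConfusion (congrArg Prod.snd hz)
      have e2 : PosP.filter (fun C => ((x:Var),false) ∈ C) = ∅ := by
        rw [filter_eq_empty_iff]
        intro C hC
        rw [hPosP, mem_biUnion] at hC
        obtain ⟨i, _, hC⟩ := hC
        rw [mem_image] at hC
        obtain ⟨T, _, rfl⟩ := hC
        intro hmem
        rcases (hposmem i T _).1 hmem with ⟨z, hz, hzz⟩ | ⟨y, hy, hyy⟩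
        · exact Bool.noConfusion (congrArg Prod.snd hzz)
        · have hyx : y = x := congrArg Prod.fst hyy
          have hge := hpad_ge i y hy
          rw [hyx] at hge
          exact absurd hx (Nat.not_lt.2 hge)
      have b1 : occ (NegP ∪ PosP) (x, true) ≤ Kp * 2^(k-l) := by
        refine le_trans (hocc_split _) ?_
        rw [e1, card_empty, Nat.zero_add]
        exact le_trans (card_filter_le _ _) hPosP_card
      have b2 : occ (NegP ∪ PosP) (x, false) ≤ Kn := by
        refine le_trans (hocc_split _) ?_
        rw [e2, card_empty, Nat.add_zero]
        exact le_trans (card_filter_le _ _) hNegP_card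
      calc occ (NegP ∪ PosP) (x,true) * occ (NegP ∪ PosP) (x,false)
          ≤ (Kp * 2^(k-l)) * Kn := Nat.mul_le_mul b1 b2
      _ = Kp * Kn * 2^(k-l) := by ring
      _ ≤ _ := Nat.le_add_right _ _
    · have eneg : ∀ b, NegP.filter (fun C => ((x:Var),b) ∈ C) = ∅ := by
        intro b
        rw [filter_eq_empty_iff]
        intro C hC
        rw [hNegP, mem_image] at hC
        obtain ⟨j, _, rfl⟩ := hC
        intro hmem
        obtain ⟨z, hz, hzz⟩ := (hnegmem j _).1 hmem
        have : z = x := congrArg Prod.fst hzz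
        subst this
        exact hx (hgx_lt j z hz)
      by_cases hpx : ∃ i₀ : Fin Kp, x ∈ pads i₀
      · obtain ⟨i₀, hi₀⟩ := hpx
        have esub : ∀ b, PosP.filter (fun C => ((x:Var),b) ∈ C) ⊆
            ((pads i₀).powerset).image (posC i₀) := by
          intro b C hC
          rw [mem_filter] at hC
          obtain ⟨hCP, hmem⟩ := hC
          rw [hPosP, mem_biUnion] at hCP
          obtain ⟨i, _, hCP⟩ := hCP
          rw [mem_image] at hCP
          obtain ⟨T, hTmem, rfl⟩ := hCP
          rcases (hposmem i T _).1 hmem with ⟨z, hz, hzz⟩ | ⟨y, hy, hyy⟩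
          · have : z = x := congrArg Prod.fst hzz
            subst this
            exact absurd (hfx_lt i z hz) hx
          · have : y = x := congrArg Prod.fst hyy
            subst this
            have : i = i₀ := hpad_eq i i₀ y hy hi₀
            subst this
            rw [mem_image]
            exact ⟨T, hTmem, rfl⟩
        have bb : ∀ b, occ (NegP ∪ PosP) (x, b) ≤ 2^(k-l) := by
          intro b
          refine le_trans (hocc_split _) ?_
          rw [eneg b, card_empty, Nat.zero_add]
          refine le_trans (card_le_card (esub b)) ?_
          exact le_trans card_image_le (by rw [card_powerset, hpad_card])
        calc occ (NegP ∪ PosP) (x,true) * occ (NegP ∪ PosP) (x,false)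
            ≤ 2^(k-l) * 2^(k-l) := Nat.mul_le_mul (bb true) (bb false)
        _ ≤ _ := Nat.le_add_left _ _
      · push_neg at hpx
        have epos : PosP.filter (fun C => ((x:Var),true) ∈ C) = ∅ := by
          rw [filter_eq_empty_iff]
          intro C hC
          rw [hPosP, mem_biUnion] at hC
          obtain ⟨i, _, hC⟩ := hC
          rw [mem_image] at hC
          obtain ⟨T, _, rfl⟩ := hC
          intro hmem
          rcases (hposmem i T _).1 hmem with ⟨z, hz, hzz⟩ | ⟨y, hy, hyy⟩
          · have : z = x := congrArg Prod.fst hzz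
            subst this
            exact hx (hfx_lt i z hz)
          · have : y = x := congrArg Prod.fst hyy
            subst this
            exact hpx i hy
        have b1 : occ (NegP ∪ PosP) ((x:Var), true) ≤ 0 := by
          have h := hocc_split ((x:Var), true)
          rw [eneg true, epos, card_empty] at h
          omega
        calc occ (NegP ∪ PosP) ((x:Var),true) * occ (NegP ∪ PosP) ((x:Var),false)
            ≤ 0 * occ (NegP ∪ PosP) ((x:Var),false) := Nat.mul_le_mul b1 (Nat.le_refl _)
        _ = 0 := Nat.zero_mul _
        _ ≤ _ := Nat.zero_le _

end Build

end AuxSZ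

section Numeric
open Finset Filter

lemma choose_ratio (n s l : ℕ) : n.choose l * (s + 1 - l)^l ≤ n^l * s.choose l := by
  have h1 : l.factorial * n.choose l ≤ n^l := by
    rw [← Nat.descFactorial_eq_factorial_mul_choose]
    exact Nat.descFactorial_le_pow n l
  have h2 : (s+1-l)^l ≤ l.factorial * s.choose l := by
    rw [← Nat.descFactorial_eq_factorial_mul_choose]
    exact Nat.pow_sub_le_descFactorial s l
  have key : (n.choose l * (s + 1 - l)^l) * l.factorial ≤ (n^l * s.choose l) * l.factorial := by
    calc (n.choose l * (s + 1 - l)^l) * l.factorial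
        = (l.factorial * n.choose l) * (s+1-l)^l := by ring
    _ ≤ n^l * (l.factorial * s.choose l) := Nat.mul_le_mul h1 h2
    _ = (n^l * s.choose l) * l.factorial := by ring
  exact Nat.le_of_mul_le_mul_right key (Nat.factorial_pos l)

lemma corr_bound (k l : ℕ) (hk : (1:ℝ) ≤ k) (hlk : l ≤ k) : (1+4/(k:ℝ))^l ≤ 55 := by
  have hkpos : (0:ℝ) < k := by linarith
  have h1 : (1:ℝ) ≤ 1 + 4/(k:ℝ) := by
    have : (0:ℝ) ≤ 4/(k:ℝ) := by positivity
    linarith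
  have h2 : (1+4/(k:ℝ))^l ≤ (1+4/(k:ℝ))^k := pow_le_pow_right₀ h1 hlk
  have h3 : (1+4/(k:ℝ)) ≤ Real.exp (4/k) := by
    have := Real.add_one_le_exp (4/(k:ℝ))
    linarith
  have h4 : (1+4/(k:ℝ))^k ≤ Real.exp (4/k) ^ k := pow_le_pow_left₀ (by positivity) h3 k
  have h5 : Real.exp (4/(k:ℝ)) ^ k = Real.exp 4 := by
    rw [← Real.exp_nat_mul]
    congr 1
    field_simp
  have h6 : Real.exp 4 ≤ 55 := by
    have he := Real.exp_one_lt_d9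
    have h7 : Real.exp 4 = (Real.exp 1)^(4:ℕ) := by
      rw [← Real.exp_nat_mul]; norm_num
    rw [h7]
    have : (Real.exp 1)^(4:ℕ) ≤ (2.7182818286:ℝ)^(4:ℕ) :=
      pow_le_pow_left₀ (le_of_lt (Real.exp_pos 1)) (le_of_lt he) 4
    nlinarith [this]
  calc (1+4/(k:ℝ))^l ≤ (1+4/(k:ℝ))^k := h2
  _ ≤ Real.exp (4/k) ^ k := h4
  _ = Real.exp 4 := h5
  _ ≤ 55 := h6

lemma KP_bound (k : ℕ) (hk : 100 ≤ k) :
    (KP1 k : ℝ) ≤ 110 * ((nn1 k : ℝ) + 2) * (41/7)^(ll1 k) := by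
  obtain ⟨h1, h2, h3, h4, h5, h6, h7, h8, h9⟩ := facts1 k hk
  set n := nn1 k
  set l := ll1 k
  set s := ss1 k
  have hcp_pos : 0 < cp1 k := Nat.choose_pos (le_trans h1 h2)
  have hcp_le : cp1 k ≤ n.choose l := Nat.choose_le_choose l h3
  have hchoose_pos : 0 < n.choose l := lt_of_lt_of_le hcp_pos hcp_le
  have hsl_pos : 0 < s + 1 - l := by omega
  -- real versions
  have hcpR : (0:ℝ) < (cp1 k : ℝ) := by exact_mod_cast hcp_pos
  have hslR : (0:ℝ) < ((s + 1 - l : ℕ) : ℝ) := by exact_mod_cast hsl_pos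
  have hdivle : ((n.choose l / cp1 k : ℕ) : ℝ) ≤ (n.choose l : ℝ) / (cp1 k : ℝ) :=
    Nat.cast_div_le
  have hKP : (KP1 k : ℝ) ≤ ((n:ℝ)+2) * ((n.choose l : ℝ) / (cp1 k : ℝ) + 1) := by
    have : (KP1 k : ℝ) = ((n:ℝ)+2) * (((n.choose l / cp1 k : ℕ) : ℝ) + 1) := by
      unfold n l
      unfold KP1
      push_cast
      ring
    rw [this]
    have hnn : (0:ℝ) ≤ (n:ℝ)+2 := by positivity
    apply mul_le_mul_of_nonneg_left _ hnn
    linarith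
  have hge1 : (1:ℝ) ≤ (n.choose l : ℝ) / (cp1 k : ℝ) := by
    rw [le_div_iff₀ hcpR]
    rw [one_mul]
    exact_mod_cast hcp_le
  have hKP2 : (KP1 k : ℝ) ≤ 2 * ((n:ℝ)+2) * ((n.choose l : ℝ) / (cp1 k : ℝ)) := by
    calc (KP1 k : ℝ) ≤ ((n:ℝ)+2) * ((n.choose l : ℝ) / (cp1 k : ℝ) + 1) := hKP
    _ ≤ ((n:ℝ)+2) * ((n.choose l : ℝ) / (cp1 k : ℝ) + (n.choose l : ℝ) / (cp1 k : ℝ)) := by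
        apply mul_le_mul_of_nonneg_left _ (by positivity)
        linarith
    _ = 2 * ((n:ℝ)+2) * ((n.choose l : ℝ) / (cp1 k : ℝ)) := by ring
  have hratio : (n.choose l : ℝ) / (cp1 k : ℝ) ≤ ((n:ℝ) / ((s + 1 - l : ℕ) : ℝ))^l := by
    rw [div_pow, div_le_div_iff₀ hcpR (by positivity)]
    have := choose_ratio n s l
    calc (n.choose l : ℝ) * ((s+1-l:ℕ):ℝ)^l = ((n.choose l * (s+1-l)^l : ℕ) : ℝ) := by push_cast; ring
    _ ≤ ((n^l * s.choose l : ℕ) : ℝ) := by exact_mod_cast this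
    _ = (n:ℝ)^l * (cp1 k : ℝ) := by unfold s l; unfold cp1; push_cast; ring
  have hbase : (n:ℝ) / ((s + 1 - l : ℕ) : ℝ) ≤ (41/7) * (1 + 4/(k:ℝ)) := by
    rw [div_le_iff₀ hslR]
    have hcast : ((s + 1 - l : ℕ) : ℝ) = (s:ℝ) + 1 - (l:ℝ) := by
      have : l ≤ s + 1 := by omega
      push_cast [this]
      ring
    rw [hcast]
    have hkR : (100:ℝ) ≤ (k:ℝ) := by exact_mod_cast hk
    have h5R : 7*(n:ℝ) + 1 ≤ 41*(s:ℝ) := by exact_mod_cast h5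
    have h8R : 34*(l:ℝ) ≤ 7*(k:ℝ) + 33 := by exact_mod_cast h8
    have hnR : (n:ℝ) = (k:ℝ)^2 := by
      unfold n; unfold nn1; push_cast; ring
    have hkpos : (0:ℝ) < k := by linarith
    rw [show (41/7) * (1 + 4/(k:ℝ)) = (41*(k+4))/(7*k) by field_simp; try ring]
    rw [div_mul_eq_mul_div, le_div_iff₀ (by positivity)]
    nlinarith [mul_le_mul_of_nonneg_left h8R (by positivity : (0:ℝ) ≤ k),
      mul_le_mul_of_nonneg_left h5R (by positivity : (0:ℝ) ≤ (k:ℝ)+4)]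
  have hfinal : ((n:ℝ) / ((s + 1 - l : ℕ) : ℝ))^l ≤ (41/7)^l * 55 := by
    have hnonneg : (0:ℝ) ≤ (n:ℝ) / ((s + 1 - l : ℕ) : ℝ) := by positivity
    calc ((n:ℝ) / ((s + 1 - l : ℕ) : ℝ))^l ≤ ((41/7) * (1 + 4/(k:ℝ)))^l :=
          pow_le_pow_left₀ hnonneg hbase l
    _ = (41/7:ℝ)^l * (1 + 4/(k:ℝ))^l := mul_pow _ _ l
    _ ≤ (41/7:ℝ)^l * 55 := by
        apply mul_le_mul_of_nonneg_left _ (by positivity)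
        exact corr_bound k l (by exact_mod_cast le_trans (by norm_num) hk) h1
  calc (KP1 k : ℝ) ≤ 2 * ((n:ℝ)+2) * ((n.choose l : ℝ) / (cp1 k : ℝ)) := hKP2
  _ ≤ 2 * ((n:ℝ)+2) * ((41/7)^l * 55) := by
      apply mul_le_mul_of_nonneg_left _ (by positivity)
      exact le_trans hratio hfinal
  _ = 110 * ((n:ℝ) + 2) * (41/7)^l := by ring

lemma KN_bound (k : ℕ) (hk : 100 ≤ k) :
    (KN1 k : ℝ) ≤ 110 * ((nn1 k : ℝ) + 2) * (41/34)^k := by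
  obtain ⟨h1, h2, h3, h4, h5, h6, h7, h8, h9⟩ := facts1 k hk
  set n := nn1 k
  set s := ss1 k
  set m := n - s + 1 with hm
  have hmn : m ≤ n := by omega
  have hcn_pos : 0 < cn1 k := Nat.choose_pos h4
  have hcn_le : cn1 k ≤ n.choose k := Nat.choose_le_choose k hmn
  have hmk_pos : 0 < m + 1 - k := by omega
  have hcnR : (0:ℝ) < (cn1 k : ℝ) := by exact_mod_cast hcn_pos
  have hmkR : (0:ℝ) < ((m + 1 - k : ℕ) : ℝ) := by exact_mod_cast hmk_pos
  have hKN : (KN1 k : ℝ) ≤ ((n:ℝ)+2) * ((n.choose k : ℝ) / (cn1 k : ℝ) + 1) := by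
    have heq : (KN1 k : ℝ) = ((n:ℝ)+2) * (((n.choose k / cn1 k : ℕ) : ℝ) + 1) := by
      unfold n
      unfold KN1
      push_cast
      ring
    rw [heq]
    apply mul_le_mul_of_nonneg_left _ (by positivity)
    have := Nat.cast_div_le (α := ℝ) (m := n.choose k) (n := cn1 k)
    linarith
  have hge1 : (1:ℝ) ≤ (n.choose k : ℝ) / (cn1 k : ℝ) := by
    rw [le_div_iff₀ hcnR, one_mul]
    exact_mod_cast hcn_le
  have hKN2 : (KN1 k : ℝ) ≤ 2 * ((n:ℝ)+2) * ((n.choose k : ℝ) / (cn1 k : ℝ)) := by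
    calc (KN1 k : ℝ) ≤ ((n:ℝ)+2) * ((n.choose k : ℝ) / (cn1 k : ℝ) + 1) := hKN
    _ ≤ ((n:ℝ)+2) * ((n.choose k : ℝ) / (cn1 k : ℝ) + (n.choose k : ℝ) / (cn1 k : ℝ)) := by
        apply mul_le_mul_of_nonneg_left _ (by positivity)
        linarith
    _ = 2 * ((n:ℝ)+2) * ((n.choose k : ℝ) / (cn1 k : ℝ)) := by ring
  have hratio : (n.choose k : ℝ) / (cn1 k : ℝ) ≤ ((n:ℝ) / ((m + 1 - k : ℕ) : ℝ))^k := by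
    rw [div_pow, div_le_div_iff₀ hcnR (by positivity)]
    have := choose_ratio n m k
    calc (n.choose k : ℝ) * ((m+1-k:ℕ):ℝ)^k = ((n.choose k * (m+1-k)^k : ℕ) : ℝ) := by push_cast; ring
    _ ≤ ((n^k * m.choose k : ℕ) : ℝ) := by exact_mod_cast this
    _ = (n:ℝ)^k * (cn1 k : ℝ) := by unfold m s; unfold cn1; push_cast; ring
  have hbase : (n:ℝ) / ((m + 1 - k : ℕ) : ℝ) ≤ (41/34) * (1 + 4/(k:ℝ)) := by
    rw [div_le_iff₀ hmkR]
    have hkm : k ≤ m + 1 := by omega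
    have hcast : ((m + 1 - k : ℕ) : ℝ) = (m:ℝ) + 1 - (k:ℝ) := by
      push_cast [hkm]
      ring
    rw [hcast]
    have hkR : (100:ℝ) ≤ (k:ℝ) := by exact_mod_cast hk
    have h34m : 34*(n:ℝ) ≤ 41*(m:ℝ) := by
      have hsn' : 34 * n ≤ 41 * m := by omega
      exact_mod_cast hsn'
    have hnR : (n:ℝ) = (k:ℝ)^2 := by
      unfold n; unfold nn1; push_cast; ring
    have hkpos : (0:ℝ) < k := by linarith
    rw [show (41/34) * (1 + 4/(k:ℝ)) = (41*(k+4))/(34*k) by field_simp; try ring]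
    rw [div_mul_eq_mul_div, le_div_iff₀ (by positivity)]
    nlinarith [mul_le_mul_of_nonneg_left h34m (by positivity : (0:ℝ) ≤ (k:ℝ)+4)]
  have hfinal : ((n:ℝ) / ((m + 1 - k : ℕ) : ℝ))^k ≤ (41/34)^k * 55 := by
    have hnonneg : (0:ℝ) ≤ (n:ℝ) / ((m + 1 - k : ℕ) : ℝ) := by positivity
    calc ((n:ℝ) / ((m + 1 - k : ℕ) : ℝ))^k ≤ ((41/34) * (1 + 4/(k:ℝ)))^k :=
          pow_le_pow_left₀ hnonneg hbase k
    _ = (41/34:ℝ)^k * (1 + 4/(k:ℝ))^k := mul_pow _ _ k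
    _ ≤ (41/34:ℝ)^k * 55 := by
        apply mul_le_mul_of_nonneg_left _ (by positivity)
        exact corr_bound k k (by exact_mod_cast le_trans (by norm_num) hk) le_rfl
  calc (KN1 k : ℝ) ≤ 2 * ((n:ℝ)+2) * ((n.choose k : ℝ) / (cn1 k : ℝ)) := hKN2
  _ ≤ 2 * ((n:ℝ)+2) * ((41/34)^k * 55) := by
      apply mul_le_mul_of_nonneg_left _ (by positivity)
      exact le_trans hratio hfinal
  _ = 110 * ((n:ℝ) + 2) * (41/34)^k := by ring

lemma pad_bound (k : ℕ) (hk : 100 ≤ k) : (4:ℝ)^(k - ll1 k) ≤ 3.01^k := by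
  obtain ⟨h1, h2, h3, h4, h5, h6, h7, h8, h9⟩ := facts1 k hk
  have hexp : 34 * (k - ll1 k) ≤ 27 * k := by omega
  apply le_of_pow_le_pow_left₀ (n := 34) (by norm_num) (by positivity)
  calc ((4:ℝ)^(k - ll1 k))^34 = 4^(34 * (k - ll1 k)) := by rw [← pow_mul, mul_comm]
  _ ≤ 4^(27*k) := pow_le_pow_right₀ (by norm_num) hexp
  _ = ((4:ℝ)^27)^k := by rw [← pow_mul]
  _ ≤ ((3.01:ℝ)^34)^k := by
      apply pow_le_pow_left₀ (by positivity) _ k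
      norm_num
  _ = ((3.01:ℝ)^k)^34 := by rw [← pow_mul, mul_comm, pow_mul]

lemma evtl : ∀ᶠ k : ℕ in atTop,
    12100*(((k:ℝ)^2+2))^2*(41/14)^(ll1 k)*(41/17)^k ≤ 3.01^k := by
  have hone : (1:ℝ) < (6001/6000:ℝ)^(34:ℕ) := one_lt_pow₀ (by norm_num) (by norm_num)
  have ho := isLittleO_pow_const_const_pow_of_one_lt (R := ℝ) 136 hone
  set A : ℝ := 12100^(34:ℕ) * (41/14)^(33:ℕ) * 2^(68:ℕ) with hA
  have hApos : 0 < A := by positivity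
  have hev := ho.def (c := 1/A) (by positivity)
  filter_upwards [hev, eventually_ge_atTop 100] with k hk1 hk2
  have hkR : (100:ℝ) ≤ (k:ℝ) := by exact_mod_cast hk2
  obtain ⟨h1, h2, h3, h4, h5, h6, h7, h8, h9⟩ := facts1 k hk2
  -- from little-o : A * k^136 ≤ ((6001/6000)^34)^k
  have hk136 : A * (k:ℝ)^136 ≤ ((6001/6000:ℝ)^(34:ℕ))^k := by
    rw [Real.norm_eq_abs, Real.norm_eq_abs] at hk1
    rw [abs_of_nonneg (by positivity), abs_of_nonneg (by positivity)] at hk1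
    calc A * (k:ℝ)^136 ≤ A * (1/A * ((6001/6000:ℝ)^(34:ℕ))^k) := by
          apply mul_le_mul_of_nonneg_left _ (le_of_lt hApos)
          exact_mod_cast hk1
    _ = ((6001/6000:ℝ)^(34:ℕ))^k := by field_simp
  apply le_of_pow_le_pow_left₀ (n := 34) (by norm_num) (by positivity)
  have hpoly : (((k:ℝ)^2+2)^2)^(34:ℕ) ≤ 2^(68:ℕ) * (k:ℝ)^136 := by
    have hk2R : (2:ℝ) ≤ (k:ℝ)^2 := by nlinarith
    calc (((k:ℝ)^2+2)^2)^(34:ℕ) ≤ ((2*(k:ℝ)^2)^2)^(34:ℕ) := by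
          apply pow_le_pow_left₀ (by positivity)
          apply pow_le_pow_left₀ (by positivity)
          linarith
    _ = 2^(68:ℕ) * (k:ℝ)^136 := by ring
  have hllexp : (41/14:ℝ)^((34:ℕ) * ll1 k) ≤ (41/14:ℝ)^(7*k+33) := by
    apply pow_le_pow_right₀ (by norm_num)
    omega
  have hQ : (41/14:ℝ)^(7:ℕ) * (41/17)^(34:ℕ) * (6001/6000)^(34:ℕ) ≤ (3.01:ℝ)^(34:ℕ) := by
    norm_num
  have e1 : ((41/14:ℝ)^(ll1 k))^(34:ℕ) = (41/14:ℝ)^((34:ℕ)*ll1 k) := by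
    rw [← pow_mul, mul_comm]
  have e2 : ((41/17:ℝ)^k)^(34:ℕ) = ((41/17:ℝ)^(34:ℕ))^k := by
    rw [← pow_mul, mul_comm, pow_mul]
  have e3 : (41/14:ℝ)^(7*k+33) = ((41/14:ℝ)^(7:ℕ))^k * (41/14:ℝ)^(33:ℕ) := by
    rw [pow_add, pow_mul]
  calc (12100*(((k:ℝ)^2+2))^2*(41/14)^(ll1 k)*(41/17)^k)^(34:ℕ)
      = 12100^(34:ℕ) * (((k:ℝ)^2+2)^2)^(34:ℕ) * (41/14)^((34:ℕ) * ll1 k) * ((41/17)^(34:ℕ))^k := by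
        rw [mul_pow, mul_pow, mul_pow, e1, e2]
  _ ≤ 12100^(34:ℕ) * (2^(68:ℕ) * (k:ℝ)^136) * (41/14)^(7*k+33) * ((41/17)^(34:ℕ))^k := by
        apply mul_le_mul_of_nonneg_right _ (by positivity)
        apply mul_le_mul (by apply mul_le_mul_of_nonneg_left hpoly (by positivity)) hllexp (by positivity) (by positivity)
  _ = (A * (k:ℝ)^136) * (((41/14:ℝ)^(7:ℕ))^k * ((41/17)^(34:ℕ))^k) := by
        rw [e3, hA]
        ring
  _ ≤ ((6001/6000:ℝ)^(34:ℕ))^k * (((41/14:ℝ)^(7:ℕ))^k * ((41/17)^(34:ℕ))^k) := by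
        apply mul_le_mul_of_nonneg_right hk136 (by positivity)
  _ = ((41/14:ℝ)^(7:ℕ) * (41/17)^(34:ℕ) * (6001/6000)^(34:ℕ))^k := by
        rw [mul_pow, mul_pow]
        ring
  _ ≤ ((3.01:ℝ)^(34:ℕ))^k := pow_le_pow_left₀ (by positivity) hQ k
  _ = ((3.01:ℝ)^k)^(34:ℕ) := by rw [← pow_mul, mul_comm, pow_mul]

end Numeric

/-- There are unsatisfiable `k`-CNF formulas with `occ_F(x) · occ_F(x̄) ∈ O(3.01^k)`
for all variables `x`. -/
theorem stmt15 :
    ∃ C : ℝ, ∃ k₀ : ℕ, ∀ k ≥ k₀, ∃ F : CNF, IsKCNF k F ∧ ¬ Satisfiable F ∧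
      ∀ x : Var, (occ F (x, true) * occ F (x, false) : ℝ) ≤ C * 3.01 ^ k := by
  obtain ⟨k₁, hk₁⟩ := Filter.eventually_atTop.1 evtl
  refine ⟨2, max k₁ 100, fun k hk => ?_⟩
  have hk100 : 100 ≤ k := le_trans (le_max_right _ _) hk
  have hkev := hk₁ k (le_trans (le_max_left _ _) hk)
  obtain ⟨h1, h2, h3, h4, h5, h6, h7, h8, h9⟩ := facts1 k hk100
  obtain ⟨f, hf1, hf2⟩ := claimP k hk100
  obtain ⟨g, hg1, hg2⟩ := claimN k hk100
  obtain ⟨F, hF1, hF2, hF3⟩ := buildF k (nn1 k) (ss1 k) (KP1 k) (KN1 k) (ll1 k)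
    (by omega) h1 f g hf1 hg1 hf2 hg2
  refine ⟨F, hF1, hF2, fun x => ?_⟩
  set l := ll1 k
  set n := nn1 k
  -- main term bound
  have hmain : ((KP1 k : ℝ)) * (KN1 k) * 2^(k-l) ≤ 3.01^k := by
    have hKp := KP_bound k hk100
    have hKn := KN_bound k hk100
    have halg : (41/7:ℝ)^l * (41/34)^k * 2^(k-l) = (41/14)^l * (41/17)^k := by
      have h2kl : (2:ℝ)^(k-l) * 2^l = 2^k := by
        rw [← pow_add]
        congr 1
        omega
      have hv1 : (41/14:ℝ)^l = (41/7)^l / 2^l := by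
        rw [← div_pow]
        norm_num
      have hv2 : (41/17:ℝ)^k = (41/34)^k * 2^k := by
        rw [← mul_pow]
        norm_num
      rw [hv1, hv2, ← h2kl]
      have h2l : (0:ℝ) < 2^l := by positivity
      field_simp
    have hnR : (n:ℝ) = (k:ℝ)^2 := by
      unfold n; unfold nn1; push_cast; ring
    calc ((KP1 k : ℝ)) * (KN1 k) * 2^(k-l)
        ≤ (110 * ((n:ℝ)+2) * (41/7)^l) * (110 * ((n:ℝ)+2) * (41/34)^k) * 2^(k-l) := by
          apply mul_le_mul_of_nonneg_right _ (by positivity)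
          apply mul_le_mul hKp hKn (by positivity) (by positivity)
    _ = 12100 * ((n:ℝ)+2)^2 * ((41/7)^l * (41/34)^k * 2^(k-l)) := by ring
    _ = 12100 * (((k:ℝ)^2+2))^2 * (41/14)^l * (41/17)^k := by
          rw [halg, hnR]; ring
    _ ≤ 3.01^k := hkev
  have hpad : ((2:ℝ))^(k-l) * 2^(k-l) ≤ 3.01^k := by
    have : ((2:ℝ))^(k-l) * 2^(k-l) = 4^(k-l) := by
      rw [← mul_pow]
      norm_num
    rw [this]
    exact pad_bound k hk100
  have hcast : (occ F (x, true) * occ F (x, false) : ℝ)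
      ≤ ((KP1 k * KN1 k * 2^(k-l) + 2^(k-l) * 2^(k-l) : ℕ) : ℝ) := by
    exact_mod_cast hF3 x
  calc (occ F (x, true) * occ F (x, false) : ℝ)
      ≤ ((KP1 k * KN1 k * 2^(k-l) + 2^(k-l) * 2^(k-l) : ℕ) : ℝ) := hcast
  _ = ((KP1 k : ℝ)) * (KN1 k) * 2^(k-l) + ((2:ℝ))^(k-l) * 2^(k-l) := by push_cast; ring
  _ ≤ 3.01^k + 3.01^k := add_le_add hmain hpad
  _ = 2 * 3.01^k := by ring
end

section
/- For k ≥ 1 and f_k(t) = t·(1−t)^{1/k} on [0,1]: (i) f_k attains its unique maximum at t = k/(k+1); (ii) f_k(t) ≤ t with equality iff t = 0; (iii) for every ℓ ≥ 0 and t ∈ [0,1], (1−t)^{ℓ/k}·t ≤ f_k^{(ℓ)}(t) ≤ (1−f_k^{(ℓ)}(t))^{ℓ/k}·t, where f_k^{(ℓ)} is the ℓ-fold iterate of f_k. -/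
open scoped Classical

private lemma aux_fle (k : ℕ) {t : ℝ} (ht : t ∈ Set.Icc (0:ℝ) 1) :
    t * (1 - t) ^ ((1:ℝ)/k) ≤ t := by
  obtain ⟨h0, h1⟩ := ht
  have h1t : (0:ℝ) ≤ 1 - t := by linarith
  have hle : (1 - t) ^ ((1:ℝ)/k) ≤ 1 :=
    Real.rpow_le_one h1t (by linarith) (by positivity)
  nlinarith [Real.rpow_nonneg h1t ((1:ℝ)/k)]

private lemma aux_flt (k : ℕ) (hk : 1 ≤ k) {t : ℝ} (ht : t ∈ Set.Icc (0:ℝ) 1) (h : 0 < t) :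
    t * (1 - t) ^ ((1:ℝ)/k) < t := by
  have hkpos : (0:ℝ) < k := by exact_mod_cast hk
  have h1t : (0:ℝ) ≤ 1 - t := by linarith [ht.2]
  have hlt : (1 - t) ^ ((1:ℝ)/k) < 1 := Real.rpow_lt_one h1t (by linarith) (by positivity)
  nlinarith

private lemma aux_iter_mem (k : ℕ) (l : ℕ) {t : ℝ} (ht : t ∈ Set.Icc (0:ℝ) 1) :
    (fun t : ℝ => t * (1 - t) ^ ((1:ℝ)/k))^[l] t ∈ Set.Icc (0:ℝ) 1 := by
  induction l with
  | zero => simpa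
  | succ l ih =>
    rw [Function.iterate_succ_apply']
    set s := (fun t : ℝ => t * (1 - t) ^ ((1:ℝ)/k))^[l] t with hs
    refine ⟨mul_nonneg ih.1 (Real.rpow_nonneg (by linarith [ih.2]) _), ?_⟩
    exact le_trans (aux_fle k ih) ih.2

private lemma aux_iter_le (k : ℕ) (l : ℕ) {t : ℝ} (ht : t ∈ Set.Icc (0:ℝ) 1) :
    (fun t : ℝ => t * (1 - t) ^ ((1:ℝ)/k))^[l] t ≤ t := by
  induction l with
  | zero => simp
  | succ l ih =>
    rw [Function.iterate_succ_apply']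
    exact le_trans (aux_fle k (aux_iter_mem k l ht)) ih

private lemma aux_poly_lt (k : ℕ) (hk : 1 ≤ k) {t : ℝ} (ht : t ∈ Set.Icc (0:ℝ) 1)
    (hne : t ≠ (k:ℝ)/(k+1)) :
    t^k * (1 - t) < ((k:ℝ)/(k+1))^k * (1 - (k:ℝ)/(k+1)) := by
  have hkpos : (0:ℝ) < k := by exact_mod_cast hk
  have hk1 : (0:ℝ) < (k:ℝ) + 1 := by linarith
  set T : ℝ := (k:ℝ)/(k+1) with hT
  have hT0 : 0 < T := by positivity
  have hT1 : T < 1 := by rw [hT, div_lt_one hk1]; linarith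
  set g : ℝ → ℝ := fun t => t^k * (1 - t) with hg
  have hderiv : ∀ x : ℝ, HasDerivAt g ((k:ℝ)*x^(k-1)*(1-x) + x^k*(-1)) x := by
    intro x
    have h1 : HasDerivAt (fun y : ℝ => y ^ k) ((k:ℝ)*x^(k-1)) x := hasDerivAt_pow k x
    have h2 : HasDerivAt (fun y : ℝ => 1 - y) (-1 : ℝ) x := by
      simpa using (hasDerivAt_id x).const_sub 1
    exact h1.mul h2
  have hcont : Continuous g := by fun_prop
  have hfact : ∀ x : ℝ, 0 < x → (k:ℝ)*x^(k-1)*(1-x) + x^k*(-1) = x^(k-1) * ((k:ℝ)*(1-x) - x) := by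
    intro x hx
    have hxk : x^k = x^(k-1)*x := by rw [← pow_succ, Nat.sub_add_cancel hk]
    rw [hxk]; ring
  have hmono : StrictMonoOn g (Set.Icc 0 T) := by
    refine strictMonoOn_of_deriv_pos (convex_Icc 0 T) hcont.continuousOn ?_
    intro x hx
    rw [interior_Icc] at hx
    rw [(hderiv x).deriv, hfact x hx.1]
    have hx2 : x * ((k:ℝ)+1) < k := by
      have := hx.2
      rw [hT, lt_div_iff₀ hk1] at this
      exact this
    have : (0:ℝ) < (k:ℝ)*(1-x) - x := by nlinarith
    exact mul_pos (pow_pos hx.1 _) this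
  have hanti : StrictAntiOn g (Set.Icc T 1) := by
    refine strictAntiOn_of_deriv_neg (convex_Icc T 1) hcont.continuousOn ?_
    intro x hx
    rw [interior_Icc] at hx
    have hx0 : 0 < x := lt_trans hT0 hx.1
    rw [(hderiv x).deriv, hfact x hx0]
    have hx2 : (k:ℝ) < x * ((k:ℝ)+1) := by
      have := hx.1
      rw [hT, div_lt_iff₀ hk1] at this
      exact this
    have : (k:ℝ)*(1-x) - x < 0 := by nlinarith
    exact mul_neg_of_pos_of_neg (pow_pos hx0 _) this
  rcases lt_or_gt_of_ne hne with h | h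
  · exact hmono ⟨ht.1, h.le⟩ ⟨hT0.le, le_refl _⟩ h
  · exact hanti ⟨le_refl _, hT1.le⟩ ⟨h.le, ht.2⟩ h

private lemma aux_pow_eq (k : ℕ) (hk : 1 ≤ k) {t : ℝ} (ht : t ∈ Set.Icc (0:ℝ) 1) :
    (t * (1 - t) ^ ((1:ℝ)/k))^k = t^k * (1 - t) := by
  have hk0 : (k:ℝ) ≠ 0 := by positivity
  have h1t : (0:ℝ) ≤ 1 - t := by linarith [ht.2]
  rw [mul_pow, ← Real.rpow_natCast ((1-t) ^ ((1:ℝ)/k)) k, ← Real.rpow_mul h1t,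
    one_div, inv_mul_cancel₀ hk0, Real.rpow_one]

private lemma aux_lower (k : ℕ) (hk : 1 ≤ k) (l : ℕ) {t : ℝ} (ht : t ∈ Set.Icc (0:ℝ) 1) :
    (1 - t) ^ ((l:ℝ)/k) * t ≤ (fun t : ℝ => t * (1 - t) ^ ((1:ℝ)/k))^[l] t := by
  have hkpos : (0:ℝ) < k := by exact_mod_cast hk
  have h1t : (0:ℝ) ≤ 1 - t := by linarith [ht.2]
  induction l with
  | zero => simp
  | succ l ih =>
    rw [Function.iterate_succ_apply']
    set s := (fun t : ℝ => t * (1 - t) ^ ((1:ℝ)/k))^[l] t with hs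
    have hsmem := aux_iter_mem k l ht
    have hst : s ≤ t := aux_iter_le k l ht
    have h1s : 1 - t ≤ 1 - s := by linarith
    have hstep : (1-t)^((1:ℝ)/k) ≤ (1-s)^((1:ℝ)/k) :=
      Real.rpow_le_rpow h1t h1s (by positivity)
    have hne : ((l:ℝ)/k + 1/k) ≠ 0 := by positivity
    have hexp : (1-t) ^ ((((l+1:ℕ)):ℝ)/(k:ℝ)) = (1-t)^((l:ℝ)/k) * (1-t)^((1:ℝ)/k) := by
      push_cast
      rw [show ((l:ℝ)+1)/(k:ℝ) = (l:ℝ)/k + 1/k by ring, Real.rpow_add' h1t hne]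
    rw [hexp]
    calc (1-t)^((l:ℝ)/k) * (1-t)^((1:ℝ)/k) * t
        = ((1-t)^((l:ℝ)/k) * t) * (1-t)^((1:ℝ)/k) := by ring
      _ ≤ s * (1-s)^((1:ℝ)/k) :=
          mul_le_mul ih hstep (Real.rpow_nonneg h1t _) hsmem.1

private lemma aux_upper (k : ℕ) (hk : 1 ≤ k) (l : ℕ) {t : ℝ} (ht : t ∈ Set.Icc (0:ℝ) 1) :
    (fun t : ℝ => t * (1 - t) ^ ((1:ℝ)/k))^[l] t ≤
      (1 - (fun t : ℝ => t * (1 - t) ^ ((1:ℝ)/k))^[l] t) ^ ((l:ℝ)/k) * t := by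
  have hkpos : (0:ℝ) < k := by exact_mod_cast hk
  have ht0 := ht.1
  induction l with
  | zero => simp
  | succ l ih =>
    rw [Function.iterate_succ_apply']
    set s := (fun t : ℝ => t * (1 - t) ^ ((1:ℝ)/k))^[l] t with hs
    have hsmem := aux_iter_mem k l ht
    have h1s : (0:ℝ) ≤ 1 - s := by linarith [hsmem.2]
    have hfs : s * (1-s)^((1:ℝ)/k) ≤ s := aux_fle k hsmem
    have hfs0 : 0 ≤ s * (1-s)^((1:ℝ)/k) := mul_nonneg hsmem.1 (Real.rpow_nonneg h1s _)
    have hne : ((l:ℝ)/k + 1/k) ≠ 0 := by positivity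
    have hexp : (1-s) ^ ((((l+1:ℕ)):ℝ)/(k:ℝ)) = (1-s)^((l:ℝ)/k) * (1-s)^((1:ℝ)/k) := by
      push_cast
      rw [show ((l:ℝ)+1)/(k:ℝ) = (l:ℝ)/k + 1/k by ring, Real.rpow_add' h1s hne]
    have hbump : (1-s) ^ ((((l+1:ℕ)):ℝ)/(k:ℝ)) ≤ (1 - s * (1-s)^((1:ℝ)/k)) ^ ((((l+1:ℕ)):ℝ)/(k:ℝ)) :=
      Real.rpow_le_rpow h1s (by linarith) (by positivity)
    calc s * (1-s)^((1:ℝ)/k)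
        ≤ ((1-s)^((l:ℝ)/k) * t) * (1-s)^((1:ℝ)/k) :=
          mul_le_mul_of_nonneg_right ih (Real.rpow_nonneg h1s _)
      _ = (1-s)^((l:ℝ)/k) * (1-s)^((1:ℝ)/k) * t := by ring
      _ = (1-s) ^ ((((l+1:ℕ)):ℝ)/(k:ℝ)) * t := by rw [hexp]
      _ ≤ (1 - s * (1-s)^((1:ℝ)/k)) ^ ((((l+1:ℕ)):ℝ)/(k:ℝ)) * t :=
          mul_le_mul_of_nonneg_right hbump ht0

/-- Basic properties of `f_k(t) = t (1-t)^{1/k}` on `[0,1]`: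
(i) unique maximum at `t = k/(k+1)`; (ii) `f_k(t) ≤ t` with equality iff `t = 0`;
(iii) `(1-t)^{ℓ/k} t ≤ f_k^{(ℓ)}(t) ≤ (1 - f_k^{(ℓ)}(t))^{ℓ/k} t`. -/
theorem stmt17 (k : ℕ) (hk : 1 ≤ k) :
    (∀ t ∈ Set.Icc (0 : ℝ) 1,
      (fun t : ℝ => t * (1 - t) ^ ((1 : ℝ) / k)) t ≤
        (fun t : ℝ => t * (1 - t) ^ ((1 : ℝ) / k)) ((k : ℝ) / (k + 1)) ∧
      ((fun t : ℝ => t * (1 - t) ^ ((1 : ℝ) / k)) t =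
        (fun t : ℝ => t * (1 - t) ^ ((1 : ℝ) / k)) ((k : ℝ) / (k + 1)) → t = (k : ℝ) / (k + 1))) ∧
    (∀ t ∈ Set.Icc (0 : ℝ) 1,
      t * (1 - t) ^ ((1 : ℝ) / k) ≤ t ∧ (t * (1 - t) ^ ((1 : ℝ) / k) = t ↔ t = 0)) ∧
    (∀ l : ℕ, ∀ t ∈ Set.Icc (0 : ℝ) 1,
      (1 - t) ^ ((l : ℝ) / k) * t ≤ (fun t : ℝ => t * (1 - t) ^ ((1 : ℝ) / k))^[l] t ∧
      (fun t : ℝ => t * (1 - t) ^ ((1 : ℝ) / k))^[l] t ≤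
        (1 - (fun t : ℝ => t * (1 - t) ^ ((1 : ℝ) / k))^[l] t) ^ ((l : ℝ) / k) * t) := by
  have hkpos : (0:ℝ) < k := by exact_mod_cast hk
  have hk1 : (0:ℝ) < (k:ℝ) + 1 := by linarith
  have hTmem : (k:ℝ)/(k+1) ∈ Set.Icc (0:ℝ) 1 := by
    constructor
    · positivity
    · rw [div_le_one hk1]; linarith
  have hkne : k ≠ 0 := by omega
  refine ⟨?_, ?_, ?_⟩
  · intro t ht
    simp only
    by_cases hne : t = (k:ℝ)/(k+1)
    · exact ⟨le_of_eq (by rw [hne]), fun _ => hne⟩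
    · have hlt := aux_poly_lt k hk ht hne
      rw [← aux_pow_eq k hk ht, ← aux_pow_eq k hk hTmem] at hlt
      have hfT0 : 0 ≤ ((k:ℝ)/(k+1)) * (1 - (k:ℝ)/(k+1)) ^ ((1:ℝ)/k) :=
        mul_nonneg hTmem.1 (Real.rpow_nonneg (by linarith [hTmem.2]) _)
      exact ⟨(lt_of_pow_lt_pow_left₀ k hfT0 hlt).le,
        fun heq => absurd (by rw [heq]) hlt.ne⟩
  · intro t ht
    refine ⟨aux_fle k ht, ?_, ?_⟩
    · intro heq
      by_contra h0
      have htpos : 0 < t := lt_of_le_of_ne ht.1 (Ne.symm h0)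
      exact absurd heq (aux_flt k hk ht htpos).ne
    · intro h0; rw [h0]; ring
  · intro l t ht
    exact ⟨aux_lower k hk l ht, aux_upper k hk l ht⟩
end

section
/- For every k ≥ 2 and every t ∈ [0,1], the (k−1)-fold iterate of f_k(t) = t·(1−t)^{1/k} satisfies f_k^{(k−1)}(t) ≤ 1/2. -/
open scoped Classical

/-- For `k ≥ 2` and `t ∈ [0,1]`, the `(k-1)`-fold iterate of `f_k(t) = t (1-t)^{1/k}`
is at most `1/2`. -/
theorem stmt18 (k : ℕ) (hk : 2 ≤ k) (t : ℝ) (ht : t ∈ Set.Icc (0 : ℝ) 1) :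
    (fun t : ℝ => t * (1 - t) ^ ((1 : ℝ) / k))^[k - 1] t ≤ 1 / 2 := by
  obtain ⟨ht0, ht1⟩ := ht
  set f : ℝ → ℝ := fun t => t * (1 - t) ^ ((1 : ℝ) / k) with hf
  have hk0 : (k : ℝ) ≠ 0 := Nat.cast_ne_zero.mpr (by omega)
  have hmap : ∀ s : ℝ, 0 ≤ s → s ≤ 1 → 0 ≤ f s ∧ f s ≤ s := by
    intro s h0 h1
    refine ⟨mul_nonneg h0 (Real.rpow_nonneg (by linarith) _), ?_⟩
    nth_rewrite 2 [← mul_one s]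
    exact mul_le_mul_of_nonneg_left
      (Real.rpow_le_one (by linarith) (by linarith) (by positivity)) h0
  have hpow : ∀ s : ℝ, s ≤ 1 → (f s) ^ k = s ^ k * (1 - s) := by
    intro s h1
    have h0 : (0 : ℝ) ≤ 1 - s := by linarith
    have key : ((1 - s) ^ ((1 : ℝ) / k)) ^ k = 1 - s := by
      rw [← Real.rpow_natCast ((1 - s) ^ ((1 : ℝ) / k)) k, ← Real.rpow_mul h0,
        one_div, inv_mul_cancel₀ hk0, Real.rpow_one]
    rw [hf]
    simp only
    rw [mul_pow, key]
  have hiter : ∀ n, 0 ≤ f^[n] t ∧ f^[n] t ≤ 1 := by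
    intro n
    induction n with
    | zero => simpa using ⟨ht0, ht1⟩
    | succ n ih =>
      rw [Function.iterate_succ_apply']
      obtain ⟨h0, h1⟩ := hmap _ ih.1 ih.2
      exact ⟨h0, h1.trans ih.2⟩
  have main : ∀ n, 1 ≤ n → f^[n] t ≤ 1 / 2 ∨ (f^[n] t) ^ k ≤ (1 / 2 : ℝ) ^ (n + 1) := by
    intro n hn
    induction n with
    | zero => omega
    | succ n ih =>
      rcases Nat.eq_zero_or_pos n with hn0 | hn1
      · -- base case: n = 0, so f^[1] t
        subst hn0
        right
        rw [Function.iterate_one, hpow t ht1]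
        have htk : t ^ k ≤ t := by
          calc t ^ k ≤ t ^ 1 := pow_le_pow_of_le_one ht0 ht1 (by omega)
          _ = t := pow_one t
        have h1t : (0 : ℝ) ≤ 1 - t := by linarith
        have : t ^ k * (1 - t) ≤ t * (1 - t) := mul_le_mul_of_nonneg_right htk h1t
        nlinarith [sq_nonneg (t - 1 / 2)]
      · have hs := hiter n
        set s := f^[n] t with hs'
        rw [Function.iterate_succ_apply']
        rcases le_or_gt s (1 / 2) with hle | hgt
        · left
          exact (hmap s hs.1 hs.2).2.trans hle
        · rcases ih hn1 with h | h
          · exact absurd h (not_le.mpr hgt)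
          · right
            rw [hpow s hs.2]
            have h1 : (1 : ℝ) - s ≤ 1 / 2 := by linarith
            have h2 : (0 : ℝ) ≤ s ^ k := pow_nonneg hs.1 k
            calc s ^ k * (1 - s) ≤ ((1 / 2 : ℝ) ^ (n + 1)) * (1 / 2) := by
                  apply mul_le_mul h h1 (by linarith) (by positivity)
            _ = (1 / 2 : ℝ) ^ (n + 1 + 1) := by ring
  rcases main (k - 1) (by omega) with h | h
  · exact h
  · have hx := (hiter (k - 1)).1
    have hkk : k - 1 + 1 = k := by omega
    rw [hkk] at h
    exact pow_le_pow_iff_left₀ hx (by norm_num : (0:ℝ) ≤ 1/2) (by omega : k ≠ 0) |>.mp h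
end
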